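/- Let W ⊆ ℝ^d be a convex compact set, x* ∈ W, and let (G^t)_{t≥0} be vectors in ℝ^d and (η_t)_{t≥0} nonnegative step sizes with Σ_{t=0}^∞ η_t = ∞ and Σ_{t=0}^∞ η_t² < ∞. Define iterates x^0 ∈ W and x^{t+1} = [x^t − η_t G^t]_W, where [·]_W is Euclidean projection onto W. Suppose there exists M < ∞ with ‖G^t‖ ≤ M for all t, and there exist D* ∈ [0, max_{x∈W} ‖x − x*‖) and ξ > 0 such that for every t, if ‖x^t − x*‖ ≥ D* then ⟨x^t − x*, G^t⟩ ≥ ξ. Then limsup_{t→∞} ‖x^t − x*‖ ≤ D*. -/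

import Mathlib

open Filter Finset
open scoped RealInnerProductSpace

set_option maxHeartbeats 1000000

/-- Projection onto a convex set does not increase distance to points of the set. -/
lemma proj_nonexpansive_aux {F : Type*} [NormedAddCommGroup F] [InnerProductSpace ℝ F]
    {K : Set F} (hK : Convex ℝ K) {p y v : F} (hp : p ∈ K) (hv : v ∈ K)
    (hmin : ∀ w ∈ K, ‖p - y‖ ≤ ‖w - y‖) : ‖p - v‖ ≤ ‖y - v‖ := by
  have hne : Nonempty K := ⟨⟨p, hp⟩⟩
  have heq : ‖y - p‖ = ⨅ w : K, ‖y - w‖ := by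
    apply le_antisymm
    · apply le_ciInf
      intro w
      have := hmin w w.2
      rwa [norm_sub_rev p y, norm_sub_rev (w : F) y] at this
    · have hbdd : BddBelow (Set.range fun w : K => ‖y - (w : F)‖) := by
        refine ⟨0, ?_⟩
        rintro _ ⟨w, rfl⟩
        exact norm_nonneg _
      exact ciInf_le hbdd ⟨p, hp⟩
  have hchar := (norm_eq_iInf_iff_real_inner_le_zero hK hp).mp heq v hv
  have hexp : ‖y - v‖ ^ 2 = ‖y - p‖ ^ 2 + 2 * ⟪y - p, p - v⟫ + ‖p - v‖ ^ 2 := by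
    have := norm_add_sq_real (y - p) (p - v)
    rwa [sub_add_sub_cancel] at this
  have hip : 0 ≤ ⟪y - p, p - v⟫ := by
    have : ⟪y - p, p - v⟫ = -⟪y - p, v - p⟫ := by
      rw [← inner_neg_right]; congr 1; abel
    linarith [hchar, this.ge, this.le]
  have hsq : ‖p - v‖ ^ 2 ≤ ‖y - v‖ ^ 2 := by nlinarith [sq_nonneg ‖y - p‖]
  exact (pow_le_pow_iff_left₀ (norm_nonneg _) (norm_nonneg _) two_ne_zero).mp hsq

/-- Lemma 1 of the paper: convergence of projected iterates
`x^{t+1} = [x^t − η_t G^t]_W` under a bounded-update and drift condition. -/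
theorem stmt0 {d : ℕ} (hd : 1 ≤ d)
    (W : Set (EuclideanSpace ℝ (Fin d))) (hWconv : Convex ℝ W) (hWcomp : IsCompact W)
    -- `proj` is the Euclidean projection onto `W`
    (proj : EuclideanSpace ℝ (Fin d) → EuclideanSpace ℝ (Fin d))
    (hproj : ∀ y, proj y ∈ W ∧ ∀ w ∈ W, ‖proj y - y‖ ≤ ‖w - y‖)
    (xstar : EuclideanSpace ℝ (Fin d)) (hxW : xstar ∈ W)
    (G : ℕ → EuclideanSpace ℝ (Fin d))
    (η : ℕ → ℝ) (hη : ∀ t, 0 ≤ η t)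
    (hηdiv : Tendsto (fun T => ∑ t ∈ Finset.range T, η t) atTop atTop)
    (hηsq : Summable fun t => η t ^ 2)
    (x : ℕ → EuclideanSpace ℝ (Fin d)) (hx0 : x 0 ∈ W)
    (hupd : ∀ t, x (t + 1) = proj (x t - η t • G t))
    (M : ℝ) (hM : ∀ t, ‖G t‖ ≤ M)
    (Dstar ξ : ℝ) (hD0 : 0 ≤ Dstar)
    (hDlt : Dstar < sSup ((fun w => ‖w - xstar‖) '' W))
    (hξ : 0 < ξ)
    (hdrift : ∀ t, Dstar ≤ ‖x t - xstar‖ → ξ ≤ ⟪x t - xstar, G t⟫) :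
    limsup (fun t => ‖x t - xstar‖) atTop ≤ Dstar := by
  set f : ℕ → ℝ := fun t => ‖x t - xstar‖ with hf
  clear_value f
  have hfnn : ∀ t, 0 ≤ f t := fun t => by simp only [hf]; exact norm_nonneg _
  -- a positive bound on gradients
  set M' : ℝ := M + 1 with hM'
  clear_value M'
  have hM'pos : 0 < M' := by
    have := (norm_nonneg (G 0)).trans (hM 0); rw [hM']; linarith
  have hMG : ∀ t, ‖G t‖ ≤ M' := fun t => (hM t).trans (by rw [hM']; linarith)
  -- nonexpansiveness of the update toward xstar
  have hstep : ∀ t, f (t + 1) ≤ ‖(x t - xstar) - η t • G t‖ := by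
    intro t
    simp only [hf]
    rw [hupd t]
    have h := proj_nonexpansive_aux hWconv (hproj (x t - η t • G t)).1 hxW
      (hproj (x t - η t • G t)).2
    calc ‖proj (x t - η t • G t) - xstar‖ ≤ ‖(x t - η t • G t) - xstar‖ := h
      _ = ‖(x t - xstar) - η t • G t‖ := by congr 1; abel
  -- squared distance recursion
  have hsq : ∀ t, f (t + 1) ^ 2 ≤ f t ^ 2 - 2 * η t * ⟪x t - xstar, G t⟫ + η t ^ 2 * M' ^ 2 := by
    intro t
    have h1 : f (t + 1) ^ 2 ≤ ‖(x t - xstar) - η t • G t‖ ^ 2 :=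
      pow_le_pow_left₀ (hfnn _) (hstep t) 2
    have h2 : ‖(x t - xstar) - η t • G t‖ ^ 2
        = f t ^ 2 - 2 * (η t * ⟪x t - xstar, G t⟫) + η t ^ 2 * ‖G t‖ ^ 2 := by
      rw [norm_sub_sq_real, real_inner_smul_right, norm_smul]
      simp [hf, mul_pow, abs_of_nonneg (hη t)]
    have h3 : η t ^ 2 * ‖G t‖ ^ 2 ≤ η t ^ 2 * M' ^ 2 := by
      apply mul_le_mul_of_nonneg_left _ (sq_nonneg _)
      exact pow_le_pow_left₀ (norm_nonneg _) (hMG t) 2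
    nlinarith
  -- simple growth bound
  have hgrow : ∀ t, f (t + 1) ≤ f t + η t * M' := by
    intro t
    calc f (t + 1) ≤ ‖(x t - xstar) - η t • G t‖ := hstep t
      _ ≤ ‖x t - xstar‖ + ‖η t • G t‖ := norm_sub_le _ _
      _ ≤ f t + η t * M' := by
          simp only [hf]
          rw [norm_smul, Real.norm_eq_abs, abs_of_nonneg (hη t)]
          exact add_le_add le_rfl (mul_le_mul_of_nonneg_left (hMG t) (hη t))
  -- decrease when far
  have hdec : ∀ t, Dstar ≤ f t → η t * M' ^ 2 ≤ ξ → f (t + 1) ^ 2 ≤ f t ^ 2 - ξ * η t := by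
    intro t hfar hsmall
    have h1 := hsq t
    simp only [hf] at hfar
    have h2 := hdrift t hfar
    have h3 : η t ^ 2 * M' ^ 2 ≤ η t * ξ := by
      calc η t ^ 2 * M' ^ 2 = η t * (η t * M' ^ 2) := by ring
        _ ≤ η t * ξ := mul_le_mul_of_nonneg_left hsmall (hη t)
    nlinarith [mul_le_mul_of_nonneg_left h2 (hη t)]
  -- η tends to 0
  have hη0 : Tendsto η atTop (nhds 0) := by
    have h2 := hηsq.tendsto_atTop_zero
    have : Tendsto (fun t => |η t|) atTop (nhds 0) := by
      have : (fun t => |η t|) = fun t => Real.sqrt (η t ^ 2) := by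
        funext t; rw [Real.sqrt_sq_eq_abs]
      rw [this]
      simpa using h2.sqrt
    simpa [abs_of_nonneg, hη] using this.congr (fun t => abs_of_nonneg (hη t))
  -- main estimate: for every ε > 0, eventually f t < Dstar + ε
  have key : ∀ ε > (0 : ℝ), ∀ᶠ t in atTop, f t < Dstar + ε := by
    intro ε hε
    -- choose T₀ such that η is small from then on
    obtain ⟨T₀, hT₀⟩ : ∃ T₀, ∀ t ≥ T₀, η t * M' ^ 2 ≤ ξ ∧ η t * M' ≤ ε / 2 := by
      have h1 : ∀ᶠ t in atTop, η t * M' ^ 2 ≤ ξ := by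
        have := hη0.eventually_le_const (show (0:ℝ) < ξ / M' ^ 2 by positivity)
        filter_upwards [this] with t ht
        rw [← le_div_iff₀ (by positivity)]; exact ht
      have h2 : ∀ᶠ t in atTop, η t * M' ≤ ε / 2 := by
        have := hη0.eventually_le_const (show (0:ℝ) < ε / 2 / M' by positivity)
        filter_upwards [this] with t ht
        rw [← le_div_iff₀ hM'pos]; exact ht
      obtain ⟨T₀, hT⟩ := (h1.and h2).exists_forall_of_atTop
      exact ⟨T₀, hT⟩
    -- Claim A: there is t₁ ≥ T₀ with f t₁ < Dstar + ε/2
    have claimA : ∃ t₁ ≥ T₀, f t₁ < Dstar + ε / 2 := by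
      by_contra hcon
      push_neg at hcon
      have hfar : ∀ t ≥ T₀, Dstar ≤ f t := by
        intro t ht; have := hcon t ht; linarith
      have hdesc : ∀ n, f (T₀ + n) ^ 2 ≤ f T₀ ^ 2 - ξ * ∑ i ∈ Finset.range n, η (T₀ + i) := by
        intro n
        induction n with
        | zero => simp
        | succ n ih =>
            have h := hdec (T₀ + n) (hfar _ (Nat.le_add_right _ _)) (hT₀ _ (Nat.le_add_right _ _)).1
            rw [Finset.sum_range_succ]
            have : T₀ + (n + 1) = (T₀ + n) + 1 := by omega
            rw [this]
            linarith
      -- tail sums diverge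
      have htail : Tendsto (fun n => ∑ i ∈ Finset.range n, η (T₀ + i)) atTop atTop := by
        have hshift : ∀ n, ∑ i ∈ Finset.range n, η (T₀ + i)
            = ∑ t ∈ Finset.range (T₀ + n), η t - ∑ t ∈ Finset.range T₀, η t := by
          intro n
          rw [Finset.sum_range_add]
          ring
        have h1 : Tendsto (fun n => ∑ t ∈ Finset.range (T₀ + n), η t) atTop atTop := by
          refine (hηdiv.comp (tendsto_add_atTop_nat T₀)).congr fun n => ?_
          simp only [Function.comp_apply]
          rw [Nat.add_comm]
        have h2 := tendsto_atTop_add_const_right atTop (-∑ t ∈ Finset.range T₀, η t) h1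
        refine Tendsto.congr (fun n => ?_) h2
        rw [hshift]; ring
      obtain ⟨n, hn⟩ := (htail.eventually_ge_atTop ((f T₀ ^ 2 + 1) / ξ)).exists
      have h1 := hdesc n
      have h2 : 0 ≤ f (T₀ + n) ^ 2 := sq_nonneg _
      have h3 : f T₀ ^ 2 + 1 ≤ (∑ i ∈ Finset.range n, η (T₀ + i)) * ξ :=
        (div_le_iff₀ hξ).mp hn
      nlinarith
    obtain ⟨t₁, ht₁T, ht₁⟩ := claimA
    -- invariant: for all n, f (t₁ + n) < Dstar + ε
    have hinv : ∀ n, f (t₁ + n) < Dstar + ε := by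
      intro n
      induction n with
      | zero => simpa using ht₁.trans_le (by linarith)
      | succ n ih =>
          have hge : T₀ ≤ t₁ + n := le_trans ht₁T (Nat.le_add_right _ _)
          have hsucc : t₁ + (n + 1) = (t₁ + n) + 1 := by omega
          rw [hsucc]
          by_cases hcase : f (t₁ + n) < Dstar + ε / 2
          · have := hgrow (t₁ + n)
            have := (hT₀ _ hge).2
            linarith
          · push_neg at hcase
            have hfar : Dstar ≤ f (t₁ + n) := by linarith
            have h := hdec (t₁ + n) hfar (hT₀ _ hge).1
            have hle : f ((t₁ + n) + 1) ^ 2 ≤ f (t₁ + n) ^ 2 := by nlinarith [mul_nonneg hξ.le (hη (t₁ + n))]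
            have := (pow_le_pow_iff_left₀ (hfnn _) (hfnn _) two_ne_zero).mp hle
            exact lt_of_le_of_lt this ih
    filter_upwards [eventually_ge_atTop t₁] with t ht
    obtain ⟨n, rfl⟩ := Nat.exists_eq_add_of_le ht
    exact hinv n
  -- conclude about limsup
  refine le_of_forall_pos_le_add fun ε hε => ?_
  have hev := key ε hε
  exact limsup_le_of_le (isCoboundedUnder_le_of_eventually_le atTop
    (Eventually.of_forall fun t => hfnn t)) (hev.mono fun t ht => ht.le)
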